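/- (Substitution lemma for # and ♮.) For all λ-terms M and N and every variable x: M#[N♮/x] ↠Λ$ M[N/x]# and M♮[N♮/x] ↠Λ$ M[N/x]♮. -/

import Mathlib

namespace Shift0

/-! ### The calculus Λ$ (de Bruijn representation) -/

/-- Terms of Λ$: variables, λ-abstractions, freeze `$(M)`, application, thaw `S₀(M)`. -/
inductive Tm : Type
  | var : Nat → Tm
  | lam : Tm → Tm
  | freeze : Tm → Tm
  | app : Tm → Tm → Tm
  | thaw : Tm → Tm
  deriving DecidableEq

namespace Tm

/-- Values of Λ$: variables, abstractions and frozen terms. -/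
inductive IsValue : Tm → Prop
  | var (n : Nat) : IsValue (.var n)
  | lam (M : Tm) : IsValue (.lam M)
  | freeze (M : Tm) : IsValue (.freeze M)

/-- Nonvalues of Λ$: applications and thawed terms. -/
inductive IsNonvalue : Tm → Prop
  | app (M N : Tm) : IsNonvalue (.app M N)
  | thaw (M : Tm) : IsNonvalue (.thaw M)

/-- Boolean value test. -/
def isVal : Tm → Bool
  | .var _ => true
  | .lam _ => true
  | .freeze _ => true
  | .app _ _ => false
  | .thaw _ => false

/-- Lift (shift) the free de Bruijn variables `≥ d` up by one. -/
def lift (d : Nat) : Tm → Tm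
  | .var n => if n < d then .var n else .var (n+1)
  | .lam M => .lam (lift (d+1) M)
  | .freeze M => .freeze (lift d M)
  | .app M N => .app (lift d M) (lift d N)
  | .thaw M => .thaw (lift d M)

/-- Capture-avoiding substitution `M[N/x]` (for the de Bruijn variable `x`);
the variables above `x` are shifted down by one. -/
def subst : Tm → Nat → Tm → Tm
  | .var n, x, N => if n = x then N else if n < x then .var n else .var (n-1)
  | .lam M, x, N => .lam (subst M (x+1) (N.lift 0))
  | .freeze M, x, N => .freeze (subst M x N)
  | .app M L, x, N => .app (subst M x N) (subst L x N)
  | .thaw M, x, N => .thaw (subst M x N)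

/-- `M $ N` is sugar for `$(N) M`. -/
def dol (M N : Tm) : Tm := .app (.freeze N) M

/-- `let x = M in N` is sugar for `S₀k.((λx.(k $ N)) $ M)`;
here `N` has the let-bound variable as de Bruijn index `0`. -/
def letIn (M N : Tm) : Tm :=
  .thaw (.lam (dol (.lam (dol (.var 1) (N.lift 1))) (M.lift 0)))

end Tm

/-- Bindable contexts `J ::= [] M | V [] | S₀([])`. -/
inductive JCtx : Type
  | appL : Tm → JCtx
  | appR : Tm → JCtx
  | thaw : JCtx

namespace JCtx

/-- Well-formedness: in `V []` the term `V` must be a value. -/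
def Wf : JCtx → Prop
  | .appL _ => True
  | .appR V => V.IsValue
  | .thaw => True

/-- Plugging a term into a bindable context. -/
def plug : JCtx → Tm → Tm
  | .appL N, M => .app M N
  | .appR V, M => .app V M
  | .thaw, M => .thaw M

/-- Lift the free variables `≥ d` of a bindable context. -/
def lift (d : Nat) : JCtx → JCtx
  | .appL N => .appL (N.lift d)
  | .appR V => .appR (V.lift d)
  | .thaw => .thaw

end JCtx

/-- Pure contexts `K ::= [] | J[K]`, represented as a list of bindable
contexts (head outermost). -/
abbrev KCtx : Type := List JCtx

/-- Plugging a term into a pure context. -/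
def KCtx.plug : KCtx → Tm → Tm
  | [], M => M
  | (J :: K), M => J.plug (KCtx.plug K M)

/-- Well-formedness of a pure context. -/
def KCtx.Wf (K : KCtx) : Prop := ∀ J ∈ K, JCtx.Wf J

/-- Lift the free variables `≥ d` of a pure context. -/
def KCtx.lift (d : Nat) (K : KCtx) : KCtx := K.map (JCtx.lift d)

namespace Tm

/-- The basic contractions of Λ$. -/
inductive Contr : Tm → Tm → Prop
  | betav (M V : Tm) : V.IsValue → Contr (.app (.lam M) V) (M.subst 0 V)
  | etav (V : Tm) : V.IsValue → Contr (.lam (.app (V.lift 0) (.var 0))) V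
  | dolv (V : Tm) : V.IsValue → Contr (.freeze V) (.lam (.app (.var 0) (V.lift 0)))
  | dolsh (V : Tm) : V.IsValue → Contr (.freeze (.thaw V)) V
  | shdol (M : Tm) : Contr (.thaw (.freeze M)) M
  | pure (V : Tm) : V.IsValue → Contr (.thaw (.lam (.app (.var 0) (V.lift 0)))) V
  | bind (J : JCtx) (P : Tm) : J.Wf → P.IsNonvalue →
      Contr (J.plug P) (letIn P ((J.lift 0).plug (.var 0)))

/-- One-step reduction of Λ$: closure of the contractions under arbitrary
contexts (including under binders). -/
inductive Step : Tm → Tm → Prop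
  | contr {M N : Tm} : Contr M N → Step M N
  | lam {M N : Tm} : Step M N → Step (.lam M) (.lam N)
  | freeze {M N : Tm} : Step M N → Step (.freeze M) (.freeze N)
  | appL {M N L : Tm} : Step M N → Step (.app M L) (.app N L)
  | appR {M N L : Tm} : Step M N → Step (.app L M) (.app L N)
  | thaw {M N : Tm} : Step M N → Step (.thaw M) (.thaw N)

/-- Multi-step reduction `↠Λ$`. -/
def Steps : Tm → Tm → Prop := Relation.ReflTransGen Step

/-- Convertibility `=Λ$`: the equivalence generated by reduction. -/
def Equiv : Tm → Tm → Prop := Relation.EqvGen Step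

end Tm

/-! ### The pure λ-calculus with βη -/

/-- Terms of the pure λ-calculus. -/
inductive Lam : Type
  | var : Nat → Lam
  | lam : Lam → Lam
  | app : Lam → Lam → Lam
  deriving DecidableEq

namespace Lam

/-- Lift the free de Bruijn variables `≥ d` up by one. -/
def lift (d : Nat) : Lam → Lam
  | .var n => if n < d then .var n else .var (n+1)
  | .lam M => .lam (lift (d+1) M)
  | .app M N => .app (lift d M) (lift d N)

/-- Capture-avoiding substitution `M[N/x]`. -/
def subst : Lam → Nat → Lam → Lam
  | .var n, x, N => if n = x then N else if n < x then .var n else .var (n-1)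
  | .lam M, x, N => .lam (subst M (x+1) (N.lift 0))
  | .app M L, x, N => .app (subst M x N) (subst L x N)

/-- β and η contractions. -/
inductive Contr : Lam → Lam → Prop
  | beta (M N : Lam) : Contr (.app (.lam M) N) (M.subst 0 N)
  | eta (M : Lam) : Contr (.lam (.app (M.lift 0) (.var 0))) M

/-- One-step βη-reduction, closed under arbitrary contexts. -/
inductive Step : Lam → Lam → Prop
  | contr {M N : Lam} : Contr M N → Step M N
  | lam {M N : Lam} : Step M N → Step (.lam M) (.lam N)
  | appL {M N L : Lam} : Step M N → Step (.app M L) (.app N L)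
  | appR {M N L : Lam} : Step M N → Step (.app L M) (.app L N)

/-- Multi-step βη-reduction `↠λ`. -/
def Steps : Lam → Lam → Prop := Relation.ReflTransGen Step

/-- βη-convertibility `=λ`. -/
def Equiv : Lam → Lam → Prop := Relation.EqvGen Step

end Lam

end Shift0

namespace Shift0

/-! ### The CPS translation `* : Λ$ → λ` and its value part `†` -/

mutual

/-- The CPS translation `M*`.  It is the full unfolding of the equations
`V* = λk.k V†`, `J[P]* = λk.P* (λx.(J[x]* k))`, `(V W)* = V† W†` and
`(S₀(V))* = V†`. -/
def cps : Tm → Lam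
  | .var n => .lam (.app (.var 0) (.var (n+1)))
  | .lam M => .lam (.app (.var 0) ((Lam.lam (cps M)).lift 0))
  | .freeze M => .lam (.app (.var 0) ((cps M).lift 0))
  | .app M N =>
      if M.isVal then
        if N.isVal then .app (cpsV M) (cpsV N)
        else
          .lam (.app ((cps N).lift 0)
            (.lam (.app (.app (((cpsV M).lift 0).lift 0) (.var 0)) (.var 1))))
      else
        if N.isVal then
          .lam (.app ((cps M).lift 0)
            (.lam (.app (.app (.var 0) (((cpsV N).lift 0).lift 0)) (.var 1))))
        else
          .lam (.app ((cps M).lift 0)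
            (.lam (.app
              (.lam (.app ((((cps N).lift 0).lift 0).lift 0)
                (.lam (.app (.app (.var 2) (.var 0)) (.var 1)))))
              (.var 1))))
  | .thaw M =>
      if M.isVal then cpsV M
      else .lam (.app ((cps M).lift 0) (.lam (.app (.var 0) (.var 1))))

/-- The value part `V†` of the CPS translation (junk on nonvalues). -/
def cpsV : Tm → Lam
  | .var n => .var n
  | .lam M => .lam (cps M)
  | .freeze M => cps M
  | .app _ _ => .var 0
  | .thaw _ => .var 0

end

/-! ### The direct-style translation `# : λ → Λ$` and its auxiliary `♮` -/

namespace Lam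

/-- Does the de Bruijn variable `x` occur free in the term? -/
def hasVar (x : Nat) : Lam → Bool
  | .var n => n = x
  | .lam M => hasVar (x+1) M
  | .app M N => hasVar x M || hasVar x N

/-- Shift the free de Bruijn variables `> d` down by one
(inverse of `lift d` on terms not containing `d` free). -/
def lower (d : Nat) : Lam → Lam
  | .var n => if d < n then .var (n-1) else .var n
  | .lam M => .lam (lower (d+1) M)
  | .app M N => .app (lower d M) (lower d N)

/-- Size of a λ-term. -/
def size : Lam → Nat
  | .var _ => 1
  | .lam M => size M + 1
  | .app M N => size M + size N + 1

theorem size_lower (d : Nat) (M : Lam) : (lower d M).size = M.size := by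
  induction M generalizing d with
  | var n => simp only [lower]; split <;> rfl
  | lam M ih => simp [lower, size, ih]
  | app M N ihM ihN => simp [lower, size, ihM, ihN]

end Lam

mutual

/-- The direct-style translation `M#`; the case `(λx.x N)# = N♮` (with
`x ∉ FV(N)`) is rendered by checking that de Bruijn variable `0` does not
occur in `N` and lowering the remaining variables. -/
def ds : Lam → Tm
  | .var n => .thaw (.var n)
  | .app M N => .app (nat M) (nat N)
  | .lam (.app (.var 0) N) =>
      if N.hasVar 0 then .thaw (.lam (.app (.var 0) (nat N)))
      else nat (N.lower 0)
  | .lam M => .thaw (.lam (ds M))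
termination_by M => M.size
decreasing_by all_goals simp [Lam.size, Lam.size_lower] <;> omega

/-- The auxiliary direct-style translation `M♮`. -/
def nat : Lam → Tm
  | .var n => .var n
  | .lam M => .lam (ds M)
  | .app M N => .freeze (.app (nat M) (nat N))
termination_by M => M.size
decreasing_by all_goals simp [Lam.size, Lam.size_lower] <;> omega

end

end Shift0

namespace Shift0

/-! ### Materzok's calculus λ$ -/

/-- Terms of λ$: variables, abstractions, applications, `S₀x.e`
(the body is under a binder) and `e $ e'`. -/
inductive LTm : Type
  | var : Nat → LTm
  | lam : LTm → LTm
  | app : LTm → LTm → LTm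
  | shift : LTm → LTm
  | dollar : LTm → LTm → LTm
  deriving DecidableEq

namespace LTm

/-- Values of λ$: variables and abstractions. -/
inductive IsValue : LTm → Prop
  | var (n : Nat) : IsValue (.var n)
  | lam (e : LTm) : IsValue (.lam e)

/-- Lift the free de Bruijn variables `≥ d` up by one. -/
def lift (d : Nat) : LTm → LTm
  | .var n => if n < d then .var n else .var (n+1)
  | .lam e => .lam (lift (d+1) e)
  | .app e f => .app (lift d e) (lift d f)
  | .shift e => .shift (lift (d+1) e)
  | .dollar e f => .dollar (lift d e) (lift d f)

/-- Capture-avoiding substitution `e[v/x]`. -/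
def subst : LTm → Nat → LTm → LTm
  | .var n, x, N => if n = x then N else if n < x then .var n else .var (n-1)
  | .lam e, x, N => .lam (subst e (x+1) (N.lift 0))
  | .app e f, x, N => .app (subst e x N) (subst f x N)
  | .shift e, x, N => .shift (subst e (x+1) (N.lift 0))
  | .dollar e f, x, N => .dollar (subst e x N) (subst f x N)

end LTm

/-- Pure contexts of λ$: `E ::= [] | E e | v E | E $ e`. -/
inductive ECtx : Type
  | hole : ECtx
  | appL : ECtx → LTm → ECtx
  | appR : LTm → ECtx → ECtx
  | dolL : ECtx → LTm → ECtx

namespace ECtx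

/-- Well-formedness: in `v E` the term `v` must be a value. -/
def Wf : ECtx → Prop
  | .hole => True
  | .appL E _ => E.Wf
  | .appR v E => v.IsValue ∧ E.Wf
  | .dolL E _ => E.Wf

/-- Plugging a term into a pure context of λ$. -/
def plug : ECtx → LTm → LTm
  | .hole, e => e
  | .appL E f, e => .app (E.plug e) f
  | .appR v E, e => .app v (E.plug e)
  | .dolL E f, e => .dollar (E.plug e) f

/-- Lift the free variables `≥ d` of a pure context. -/
def lift (d : Nat) : ECtx → ECtx
  | .hole => .hole
  | .appL E f => .appL (E.lift d) (f.lift d)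
  | .appR v E => .appR (v.lift d) (E.lift d)
  | .dolL E f => .dolL (E.lift d) (f.lift d)

end ECtx

namespace LTm

/-- The axioms of λ$. -/
inductive Ax : LTm → LTm → Prop
  | betav (e v : LTm) : v.IsValue → Ax (.app (.lam e) v) (e.subst 0 v)
  | etav (v : LTm) : v.IsValue → Ax (.lam (.app (v.lift 0) (.var 0))) v
  | dolv (v w : LTm) : v.IsValue → w.IsValue → Ax (.dollar v w) (.app v w)
  | dolE (v : LTm) (E : ECtx) (e : LTm) : v.IsValue → E.Wf →
      Ax (.dollar v (E.plug e))
         (.dollar (.lam (.dollar (v.lift 0) ((E.lift 0).plug (.var 0)))) e)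
  | betad (v e : LTm) : v.IsValue → Ax (.dollar v (.shift e)) (e.subst 0 v)
  | etad (e : LTm) : Ax (.shift (.dollar (.var 0) (e.lift 0))) e

/-- The axioms applied in an arbitrary context. -/
inductive AStep : LTm → LTm → Prop
  | ax {e f : LTm} : Ax e f → AStep e f
  | lam {e f : LTm} : AStep e f → AStep (.lam e) (.lam f)
  | appL {e f g : LTm} : AStep e f → AStep (.app e g) (.app f g)
  | appR {e f g : LTm} : AStep e f → AStep (.app g e) (.app g f)
  | shift {e f : LTm} : AStep e f → AStep (.shift e) (.shift f)
  | dolL {e f g : LTm} : AStep e f → AStep (.dollar e g) (.dollar f g)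
  | dolR {e f g : LTm} : AStep e f → AStep (.dollar g e) (.dollar g f)

/-- The equational theory `=λ$` generated by the axioms. -/
def Equiv : LTm → LTm → Prop := Relation.EqvGen AStep

end LTm

/-- The embedding `ι : λ$ → Λ$`. -/
def iota : LTm → Tm
  | .var n => .var n
  | .lam e => .lam (iota e)
  | .app e f => .app (iota e) (iota f)
  | .shift e => .thaw (.lam (iota e))
  | .dollar e f => .app (.freeze (iota f)) (iota e)

/-- The translation `π : Λ$ → λ$`. -/
def pi : Tm → LTm
  | .var n => .var n
  | .lam M => .lam (pi M)
  | .freeze M => .lam (.dollar (.var 0) ((pi M).lift 0))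
  | .app M N => .app (pi M) (pi N)
  | .thaw M => .app (.lam (.shift (.app (.var 1) (.var 0)))) (pi M)

/-- Materzok's CPS translation `⟦·⟧ : λ$ → λ` (with the value translation
`⟪x⟫ = x`, `⟪λx.e⟫ = λx.⟦e⟧` inlined). -/
def mcps : LTm → Lam
  | .var n => .lam (.app (.var 0) (.var (n+1)))
  | .lam e => .lam (.app (.var 0) ((Lam.lam (mcps e)).lift 0))
  | .app e f => .lam (.app ((mcps e).lift 0)
      (.lam (.app (((mcps f).lift 0).lift 0)
        (.lam (.app (.app (.var 1) (.var 0)) (.var 2))))))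
  | .shift e => .lam (mcps e)
  | .dollar e f => .lam (.app ((mcps e).lift 0)
      (.lam (.app (.app (((mcps f).lift 0).lift 0) (.var 0)) (.var 1))))

end Shift0
namespace Shift0
namespace Lam

theorem lift_lift (d e : Nat) (h : d ≤ e) (M : Lam) :
    lift d (lift e M) = lift (e+1) (lift d M) := by
  induction M generalizing d e with
  | var n =>
    simp only [lift]; split_ifs <;> simp only [lift] <;> split_ifs <;>
      first | rfl | (simp only [Lam.var.injEq]; omega) | (exfalso; omega)
  | lam M ih => simp only [lift, ih (d+1) (e+1) (by omega)]
  | app M N ihM ihN => simp only [lift, ihM d e h, ihN d e h]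

theorem lower_lift_self (e : Nat) (M : Lam) : lower e (lift e M) = M := by
  induction M generalizing e with
  | var n =>
    simp only [lift]; split_ifs <;> simp only [lower] <;> split_ifs <;>
      first | rfl | (simp only [Lam.var.injEq]; omega) | (exfalso; omega)
  | lam M ih => simp only [lift, lower, ih]
  | app M N ihM ihN => simp only [lift, lower, ihM, ihN]

theorem hasVar_lift_lt (x d : Nat) (h : x < d) (M : Lam) :
    hasVar x (lift d M) = hasVar x M := by
  induction M generalizing x d with
  | var n =>
    simp only [lift]; split_ifs <;> simp only [hasVar, decide_eq_decide] <;> omega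
  | lam M ih => simp only [lift, hasVar, ih (x+1) (d+1) (by omega)]
  | app M N ihM ihN => simp only [lift, hasVar, ihM x d h, ihN x d h]

theorem hasVar_lift_self (e : Nat) (M : Lam) : hasVar e (lift e M) = false := by
  induction M generalizing e with
  | var n =>
    simp only [lift]; split_ifs with h <;>
      simp only [hasVar, decide_eq_false_iff_not] <;> omega
  | lam M ih => simp only [lift, hasVar, ih]
  | app M N ihM ihN => simp only [lift, hasVar, ihM, ihN, Bool.or_self]

theorem lower_lift (e d : Nat) (h : e ≤ d) (M : Lam) (hM : hasVar e M = false) :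
    lower e (lift (d+1) M) = lift d (lower e M) := by
  induction M generalizing e d with
  | var n =>
    simp only [hasVar, decide_eq_false_iff_not] at hM
    simp only [lift]; split_ifs <;> simp only [lower] <;> split_ifs <;>
      simp only [lift] <;> split_ifs <;>
      first | rfl | (simp only [Lam.var.injEq]; omega) | (exfalso; omega)
  | lam M ih =>
    simp only [hasVar] at hM
    simp only [lift, lower, ih (e+1) (d+1) (by omega) hM]
  | app M N ihM ihN =>
    simp only [hasVar, Bool.or_eq_false_iff] at hM
    simp only [lift, lower, ihM e d h hM.1, ihN e d h hM.2]

theorem lift_lower_self (e : Nat) (M : Lam) (h : hasVar e M = false) :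
    lift e (lower e M) = M := by
  induction M generalizing e with
  | var n =>
    simp only [hasVar, decide_eq_false_iff_not] at h
    simp only [lower]; split_ifs <;> simp only [lift] <;> split_ifs <;>
      first | rfl | (simp only [Lam.var.injEq]; omega) | (exfalso; omega)
  | lam M ih => simp only [hasVar] at h; simp only [lower, lift, ih (e+1) h]
  | app M N ihM ihN =>
    simp only [hasVar, Bool.or_eq_false_iff] at h
    simp only [lower, lift, ihM e h.1, ihN e h.2]

theorem hasVar_subst (e x : Nat) (h : e ≤ x) (M N : Lam) :
    hasVar e (subst M (x+1) (lift e N)) = hasVar e M := by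
  induction M generalizing e x N with
  | var n =>
    simp only [subst]; split_ifs with h1 h2
    · subst h1
      rw [hasVar_lift_self]
      simp only [hasVar]
      symm; simp only [decide_eq_false_iff_not]; omega
    · rfl
    · simp only [hasVar, decide_eq_decide]; omega
  | lam M ih =>
    simp only [subst, hasVar, lift_lift 0 e (by omega) N]
    exact ih (e+1) (x+1) (by omega) (N.lift 0)
  | app M L ihM ihL =>
    simp only [subst, hasVar, ihM e x h N, ihL e x h N]

theorem lower_subst (e x : Nat) (h : e ≤ x) (M N : Lam) (hM : hasVar e M = false) :
    lower e (subst M (x+1) (lift e N)) = subst (lower e M) x N := by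
  induction M generalizing e x N with
  | var n =>
    simp only [hasVar, decide_eq_false_iff_not] at hM
    simp only [subst]; split_ifs with h1 h2
    · subst h1; rw [lower_lift_self]
      simp only [lower]; rw [if_pos (show e < x + 1 by omega)]
      simp only [subst]; rw [if_pos (show x + 1 - 1 = x by omega)]
    · simp only [lower]; split_ifs <;> simp only [subst] <;> split_ifs <;>
        first | rfl | (simp only [Lam.var.injEq]; omega) | (exfalso; omega)
    · simp only [lower]; split_ifs <;> simp only [subst] <;> split_ifs <;>
        first | rfl | (simp only [Lam.var.injEq]; omega) | (exfalso; omega)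
  | lam M ih =>
    simp only [hasVar] at hM
    simp only [subst, lower, lift_lift 0 e (by omega) N]
    rw [ih (e+1) (x+1) (by omega) (N.lift 0) hM]
  | app M L ihM ihL =>
    simp only [hasVar, Bool.or_eq_false_iff] at hM
    simp only [subst, lower, ihM e x h N hM.1, ihL e x h N hM.2]

theorem lift_ne_var0 (X : Lam) (d : Nat) (h : X ≠ .var 0) : X.lift d ≠ .var 0 := by
  cases X with
  | var n =>
    simp only [lift]; split_ifs <;> simp_all <;> omega
  | lam M => simp [lift]
  | app M N => simp [lift]

theorem lift0_ne_var0 (X : Lam) : X.lift 0 ≠ .var 0 := by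
  cases X with
  | var n => simp [lift]
  | lam M => simp [lift]
  | app M N => simp [lift]

theorem subst_ne_var0 (X : Lam) (x : Nat) (N : Lam) (h : X ≠ .var 0) :
    X.subst (x+1) (N.lift 0) ≠ .var 0 := by
  cases X with
  | var n =>
    simp only [subst]; split_ifs with h1 h2
    · exact lift0_ne_var0 N
    · simp only [ne_eq, Lam.var.injEq]; exact fun hn => h (by rw [hn])
    · simp only [ne_eq, Lam.var.injEq]; omega
  | lam M => simp [subst]
  | app M N => simp [subst]

end Lam

namespace Tm

theorem Steps.refl' {M : Tm} : Steps M M := Relation.ReflTransGen.refl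

theorem Steps.lam' {M N : Tm} (h : Steps M N) : Steps (.lam M) (.lam N) :=
  Relation.ReflTransGen.lift (fun t => Tm.lam t) (fun _ _ => Step.lam) _ _ h

theorem Steps.thaw' {M N : Tm} (h : Steps M N) : Steps (.thaw M) (.thaw N) :=
  Relation.ReflTransGen.lift (fun t => Tm.thaw t) (fun _ _ => Step.thaw) _ _ h

theorem Steps.freeze' {M N : Tm} (h : Steps M N) : Steps (.freeze M) (.freeze N) :=
  Relation.ReflTransGen.lift (fun t => Tm.freeze t) (fun _ _ => Step.freeze) _ _ h

theorem Steps.app' {M N L K : Tm} (h1 : Steps M N) (h2 : Steps L K) :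
    Steps (.app M L) (.app N K) :=
  Relation.ReflTransGen.trans
    (Relation.ReflTransGen.lift (fun t => Tm.app t L) (fun _ _ => Step.appL) _ _ h1)
    (Relation.ReflTransGen.lift (fun t => Tm.app N t) (fun _ _ => Step.appR) _ _ h2)

end Tm

theorem nat_isValue (M : Lam) : (nat M).IsValue := by
  cases M <;> simp only [nat] <;> constructor

theorem ds_app (X Y : Lam) : ds (.app X Y) = .app (nat X) (nat Y) := by
  simp [ds]

theorem ds_lam_app (X Y : Lam) (hX : X ≠ .var 0) :
    ds (.lam (.app X Y)) = .thaw (.lam (.app (nat X) (nat Y))) := by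
  match X with
  | .var 0 => exact absurd rfl hX
  | .var (m+1) => simp [ds, nat]
  | .lam M => simp [ds, nat]
  | .app M N => simp [ds, nat]

theorem ds_lam_var (n : Nat) : ds (.lam (.var n)) = .thaw (.lam (.thaw (.var n))) := by
  simp [ds]

theorem ds_lam_lam (M : Lam) : ds (.lam (.lam M)) = .thaw (.lam (ds (.lam M))) := by
  simp [ds]

theorem ds_lam_special (Y : Lam) (hY : Y.hasVar 0 = false) :
    ds (.lam (.app (.var 0) Y)) = nat (Y.lower 0) := by
  simp [ds, hY]

theorem ds_lam_nonspecial (Y : Lam) (hY : Y.hasVar 0 = true) :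
    ds (.lam (.app (.var 0) Y)) = .thaw (.lam (.app (.var 0) (nat Y))) := by
  simp [ds, nat, hY]

theorem lift_aux : ∀ (k : Nat) (M : Lam), M.size ≤ k → ∀ d,
    ds (Lam.lift d M) = Tm.lift d (ds M) ∧ nat (Lam.lift d M) = Tm.lift d (nat M) := by
  intro k
  induction k with
  | zero => intro M hM; cases M <;> simp [Lam.size] at hM
  | succ k ih =>
    intro M hM d
    match M with
    | .var n =>
      constructor <;> (simp only [Lam.lift]; split_ifs with h) <;>
        simp [ds, nat, Tm.lift, h]
    | .app M N =>
      simp only [Lam.size] at hM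
      obtain ⟨ihM1, ihM2⟩ := ih M (by omega) d
      obtain ⟨ihN1, ihN2⟩ := ih N (by omega) d
      constructor <;> simp [Lam.lift, ds, nat, Tm.lift, ihM2, ihN2]
    | .lam M =>
      simp only [Lam.size] at hM
      have natpart : nat (Lam.lift d (.lam M)) = Tm.lift d (nat (.lam M)) := by
        simp only [Lam.lift, nat, Tm.lift]
        rw [(ih M (by omega) (d+1)).1]
      refine ⟨?_, natpart⟩
      match M with
      | .var n =>
        simp only [Lam.lift]; split_ifs with h <;> simp [ds, Tm.lift, h]
      | .lam M' =>
        have h1 := (ih (.lam M') (by simp only [Lam.size] at hM ⊢; omega) (d+1)).1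
        simp only [Lam.lift] at h1 ⊢
        rw [ds_lam_lam, ds_lam_lam, h1]
        simp [Tm.lift]
      | .app X Y =>
        simp only [Lam.size] at hM
        by_cases hX0 : X = .var 0
        · subst hX0
          have h0 : (0:Nat) < d + 1 := by omega
          simp only [Lam.lift, if_pos h0]
          by_cases hY : Y.hasVar 0
          · rw [ds_lam_nonspecial _ (by rw [Lam.hasVar_lift_lt 0 (d+1) (by omega)]; exact hY),
                ds_lam_nonspecial _ hY, (ih Y (by omega) (d+1)).2]
            simp [Tm.lift]
          · simp only [Bool.not_eq_true] at hY
            rw [ds_lam_special _ (by rw [Lam.hasVar_lift_lt 0 (d+1) (by omega)]; exact hY),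
                ds_lam_special _ hY, Lam.lower_lift 0 d (by omega) Y hY]
            exact (ih (Y.lower 0) (by rw [Lam.size_lower]; omega) d).2
        · simp only [Lam.lift]
          rw [ds_lam_app _ _ (Lam.lift_ne_var0 X (d+1) hX0), ds_lam_app X Y hX0,
              (ih X (by omega) (d+1)).2, (ih Y (by omega) (d+1)).2]
          simp [Tm.lift]

theorem nat_lift (M : Lam) (d : Nat) : nat (M.lift d) = Tm.lift d (nat M) :=
  (lift_aux M.size M le_rfl d).2

theorem ds_lift (M : Lam) (d : Nat) : ds (M.lift d) = Tm.lift d (ds M) :=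
  (lift_aux M.size M le_rfl d).1

theorem thaw_nat (L : Lam) : Tm.Steps (.thaw (nat L)) (ds L) := by
  match L with
  | .var n => simp only [nat, ds]; exact Tm.Steps.refl'
  | .app M N =>
    simp only [nat]
    rw [ds_app]
    exact Relation.ReflTransGen.single (Tm.Step.contr (Tm.Contr.shdol _))
  | .lam M =>
    match M with
    | .var n => rw [ds_lam_var]; simp only [nat, ds]; exact Tm.Steps.refl'
    | .lam M' => rw [ds_lam_lam]; simp only [nat]; exact Tm.Steps.refl'
    | .app X Y =>
      by_cases hX0 : X = .var 0
      · subst hX0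
        by_cases hY : Y.hasVar 0
        · rw [ds_lam_nonspecial _ hY]
          simp only [nat]; rw [ds_app]; simp only [nat]
          exact Tm.Steps.refl'
        · simp only [Bool.not_eq_true] at hY
          rw [ds_lam_special _ hY]
          simp only [nat]; rw [ds_app]
          rw [show nat Y = Tm.lift 0 (nat (Y.lower 0)) by
            conv_lhs => rw [← Lam.lift_lower_self 0 Y hY]
            exact nat_lift _ 0]
          simp only [nat]
          exact Relation.ReflTransGen.single
            (Tm.Step.contr (Tm.Contr.pure _ (nat_isValue _)))
      · rw [ds_lam_app X Y hX0]
        simp only [nat]; rw [ds_app]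
        exact Tm.Steps.refl'

end Shift0
namespace Shift0

theorem ds_lam_lift0 (N : Lam) : ds (.lam (N.lift 0)) = .thaw (.lam (ds (N.lift 0))) := by
  cases N with
  | var n => simp [Lam.lift, ds]
  | lam M => simp only [Lam.lift]; rw [ds_lam_lam]
  | app X Y =>
    simp only [Lam.lift]
    rw [ds_lam_app _ _ (Lam.lift0_ne_var0 X), ds_app]

theorem main_aux : ∀ (k : Nat) (M : Lam), M.size ≤ k → ∀ (N : Lam) (x : Nat),
    Tm.Steps ((ds M).subst x (nat N)) (ds (M.subst x N)) ∧
    Tm.Steps ((nat M).subst x (nat N)) (nat (M.subst x N)) := by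
  intro k
  induction k with
  | zero => intro M hM; cases M <;> simp [Lam.size] at hM
  | succ k ih =>
    intro M hM N x
    match M with
    | .var n =>
      constructor
      · simp only [ds, Tm.subst, Lam.subst]
        split_ifs with h1 h2
        · exact thaw_nat N
        · simp only [ds]; exact Tm.Steps.refl'
        · simp only [ds]; exact Tm.Steps.refl'
      · simp only [nat, Tm.subst, Lam.subst]
        split_ifs <;> first | exact Tm.Steps.refl' | (simp only [nat]; exact Tm.Steps.refl')
    | .app M L =>
      simp only [Lam.size] at hM
      obtain ⟨_, ihM⟩ := ih M (by omega) N x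
      obtain ⟨_, ihL⟩ := ih L (by omega) N x
      constructor
      · rw [ds_app]
        simp only [Lam.subst]
        rw [ds_app]
        simp only [Tm.subst]
        exact Tm.Steps.app' ihM ihL
      · simp only [nat, Lam.subst, Tm.subst]
        exact Tm.Steps.freeze' (Tm.Steps.app' ihM ihL)
    | .lam M =>
      simp only [Lam.size] at hM
      have natpart : Tm.Steps ((nat (.lam M)).subst x (nat N))
          (nat ((Lam.lam M).subst x N)) := by
        simp only [nat, Lam.subst, Tm.subst, ← nat_lift]
        exact Tm.Steps.lam' (ih M (by omega) (N.lift 0) (x+1)).1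
      refine ⟨?_, natpart⟩
      match M with
      | .var n =>
        rw [ds_lam_var]
        simp only [Tm.subst, Lam.subst, ← nat_lift]
        split_ifs with h1 h2
        · rw [ds_lam_lift0]
          exact Tm.Steps.thaw' (Tm.Steps.lam' (thaw_nat (N.lift 0)))
        · rw [ds_lam_var]; exact Tm.Steps.refl'
        · rw [ds_lam_var]; exact Tm.Steps.refl'
      | .lam M' =>
        rw [ds_lam_lam]
        simp only [Tm.subst, Lam.subst, ← nat_lift]
        rw [ds_lam_lam]
        exact Tm.Steps.thaw' (Tm.Steps.lam'
          ((ih (.lam M') (by simp only [Lam.size] at hM ⊢; omega) (N.lift 0) (x+1)).1))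
      | .app X Y =>
        simp only [Lam.size] at hM
        by_cases hX0 : X = .var 0
        · subst hX0
          simp only [Lam.subst]
          rw [if_neg (show ¬((0:Nat) = x+1) by omega), if_pos (show (0:Nat) < x+1 by omega)]
          by_cases hY : Y.hasVar 0
          · rw [ds_lam_nonspecial _ hY,
              ds_lam_nonspecial _ (by rw [Lam.hasVar_subst 0 x (by omega)]; exact hY)]
            simp only [Tm.subst, ← nat_lift]
            rw [if_neg (show ¬((0:Nat) = x+1) by omega), if_pos (show (0:Nat) < x+1 by omega)]
            exact Tm.Steps.thaw' (Tm.Steps.lam' (Tm.Steps.app' Tm.Steps.refl'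
              (ih Y (by omega) (N.lift 0) (x+1)).2))
          · simp only [Bool.not_eq_true] at hY
            rw [ds_lam_special _ hY,
              ds_lam_special _ (by rw [Lam.hasVar_subst 0 x (by omega)]; exact hY),
              Lam.lower_subst 0 x (by omega) Y N hY]
            exact (ih (Y.lower 0) (by rw [Lam.size_lower]; omega) N x).2
        · rw [ds_lam_app X Y hX0]
          simp only [Lam.subst]
          rw [ds_lam_app _ _ (Lam.subst_ne_var0 X x N hX0)]
          simp only [Tm.subst, ← nat_lift]
          exact Tm.Steps.thaw' (Tm.Steps.lam' (Tm.Steps.app'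
            (ih X (by omega) (N.lift 0) (x+1)).2
            (ih Y (by omega) (N.lift 0) (x+1)).2))

end Shift0

namespace Shift0

/-- **Substitution lemma for `#` and `♮`.**  For all λ-terms `M`, `N` and
every variable `x`: `M#[N♮/x] ↠Λ$ M[N/x]#` and `M♮[N♮/x] ↠Λ$ M[N/x]♮`. -/
theorem ds_subst (M N : Lam) (x : Nat) :
    Tm.Steps ((ds M).subst x (nat N)) (ds (M.subst x N)) ∧
    Tm.Steps ((nat M).subst x (nat N)) (nat (M.subst x N)) := by
  exact main_aux M.size M le_rfl N x

end Shift0
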